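/- arXiv:1904.10157 — 3 statements merged into one kernel-verified Lean document; each statement's English description precedes it below -/
import Mathlib

section
/- Let N be a positive integer and let x, y ∈ {0,1}^N be binary vectors with |(F x)_n| = |(F y)_n| for all n = 0,…,N−1. If the number of nonzero entries ‖x‖₀ belongs to {0, 1, 2, 3, N−3, N−2, N−1, N}, then x and y are equal up to trivial ambiguities: there exists an integer k₀ such that either y_k = x_{(k+k₀) mod N} for all k, or y_k = x_{(k₀ − k) mod N} for all k. -/
set_option linter.unusedSectionVars false
set_option linter.unusedVariables false


open scoped BigOperators
open Finset

/-- Discrete Fourier transform of `x ∈ ℂ^N`. -/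
noncomputable def dft {N : ℕ} (x : Fin N → ℂ) (n : Fin N) : ℂ :=
  ∑ k : Fin N, x k * Complex.exp (-2 * Real.pi * Complex.I * ((k : ℕ) : ℂ) * ((n : ℕ) : ℂ) / (N : ℂ))

/-- Inverse discrete Fourier transform. -/
noncomputable def idft {N : ℕ} (u : Fin N → ℂ) (j : Fin N) : ℂ :=
  (1 / (N : ℂ)) * ∑ n : Fin N, u n * Complex.exp (2 * Real.pi * Complex.I * ((j : ℕ) : ℂ) * ((n : ℕ) : ℂ) / (N : ℂ))

/-- `M`-point oversampled discrete Fourier transform of `x ∈ ℂ^N`. -/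
noncomputable def odft {N : ℕ} (M : ℕ) (x : Fin N → ℂ) (n : Fin M) : ℂ :=
  ∑ k : Fin N, x k * Complex.exp (-2 * Real.pi * Complex.I * ((k : ℕ) : ℂ) * ((n : ℕ) : ℂ) / (M : ℂ))

/-- Periodic autocorrelation of `x ∈ ℂ^N`. -/
noncomputable def autp {N : ℕ} (x : Fin N → ℂ) (j : Fin N) : ℂ :=
  ∑ k : Fin N, x (k + j) * (starRingEnd ℂ) (x k)

/-- Extension of `x ∈ ℂ^N` to `ℤ` by zero. -/
noncomputable def extz {N : ℕ} (x : Fin N → ℂ) (i : ℤ) : ℂ :=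
  if h : 0 ≤ i ∧ i < (N : ℤ) then x ⟨i.toNat, by omega⟩ else 0

/-- (Regular) autocorrelation of `x ∈ ℂ^N`, as a function on `ℤ`. -/
noncomputable def aut {N : ℕ} (x : Fin N → ℂ) (j : ℤ) : ℂ :=
  ∑ k : Fin N, extz x (((k : ℕ) : ℤ) + j) * (starRingEnd ℂ) (extz x ((k : ℕ) : ℤ))

/-- Circular convolution on `ℂ^N`. -/
noncomputable def cconv {N : ℕ} (v x : Fin N → ℂ) (j : Fin N) : ℂ :=
  ∑ k : Fin N, v k * x (j - k)

/-- The ℓ² norm on `ℂ^N`. -/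
noncomputable def l2 {N : ℕ} (x : Fin N → ℂ) : ℝ :=
  Real.sqrt (∑ k : Fin N, ‖x k‖ ^ 2)

/-- The circular finite-difference operator. -/
noncomputable def nabla {N : ℕ} [NeZero N] (x : Fin N → ℂ) (k : Fin N) : ℂ :=
  x (k + 1) - x k

/-- The sup norm on `ℂ^N`. -/
noncomputable def linf {N : ℕ} [NeZero N] (x : Fin N → ℂ) : ℝ :=
  Finset.univ.sup' Finset.univ_nonempty (fun k => ‖x k‖)

/-- The sup norm on `ℝ^N`. -/
noncomputable def linfR {N : ℕ} [NeZero N] (x : Fin N → ℝ) : ℝ :=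
  Finset.univ.sup' Finset.univ_nonempty (fun k => |x k|)

/-- Cyclic index shift: `k ↦ (k + s) mod N`. -/
def shiftIdx {N : ℕ} [NeZero N] (k : Fin N) (s : ℕ) : Fin N :=
  ⟨((k : ℕ) + s) % N, Nat.mod_lt _ (Nat.pos_of_ne_zero (NeZero.ne N))⟩

/-- A window of length `W` with constant value `a`, extended by zero. -/
noncomputable def win (W : ℕ) (a : ℂ) (i : ℤ) : ℂ :=
  if 0 ≤ i ∧ i < (W : ℤ) then a else 0


section Helpers
lemma orth (N : ℕ) (hN : N ≠ 0) (m : ℤ) :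
    ∑ n : Fin N, Complex.exp (2 * Real.pi * Complex.I * ((n:ℕ):ℂ) * (m:ℂ) / (N:ℂ)) =
      if (N:ℤ) ∣ m then (N:ℂ) else 0 := by
  have hNC : (N:ℂ) ≠ 0 := Nat.cast_ne_zero.mpr hN
  set ω : ℂ := Complex.exp (2 * Real.pi * Complex.I * (m:ℂ) / (N:ℂ)) with hω
  have hterm : ∀ n : Fin N, Complex.exp (2 * Real.pi * Complex.I * ((n:ℕ):ℂ) * (m:ℂ) / (N:ℂ)) = ω ^ (n:ℕ) := by
    intro n
    rw [hω, ← Complex.exp_nat_mul]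
    ring_nf
  rw [Finset.sum_congr rfl (fun n _ => hterm n), Fin.sum_univ_eq_sum_range (fun i => ω ^ i)]
  by_cases hdvd : (N:ℤ) ∣ m
  · obtain ⟨t, rfl⟩ := hdvd
    have : ω = 1 := by
      rw [hω]
      have : (2 * (Real.pi:ℂ) * Complex.I * ((N:ℂ) * (t:ℂ)) / (N:ℂ)) = (t:ℂ) * (2 * Real.pi * Complex.I) := by
        field_simp
      push_cast
      rw [this, Complex.exp_int_mul_two_pi_mul_I]
    rw [this, if_pos ⟨t, rfl⟩]
    simp [Finset.sum_const, Finset.card_range]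
  · have hω1 : ω ≠ 1 := by
      intro h
      rw [hω, Complex.exp_eq_one_iff] at h
      obtain ⟨t, ht⟩ := h
      have hπ : (Real.pi : ℂ) ≠ 0 := by
        exact Complex.ofReal_ne_zero.mpr Real.pi_ne_zero
      have : (m:ℂ) = (t:ℂ) * (N:ℂ) := by
        field_simp at ht
        linear_combination ht
      have : m = t * N := by exact_mod_cast this
      exact hdvd ⟨t, by linarith⟩
    have hωN : ω ^ N = 1 := by
      rw [hω, ← Complex.exp_nat_mul]
      have : (N:ℂ) * (2 * (Real.pi:ℂ) * Complex.I * (m:ℂ) / (N:ℂ)) = (m:ℂ) * (2 * Real.pi * Complex.I) := by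
        field_simp
      rw [this, Complex.exp_int_mul_two_pi_mul_I]
    rw [geom_sum_eq hω1, hωN]
    simp [hdvd]

lemma dvd_iff_fin {N : ℕ} [NeZero N] (l k j : Fin N) :
    (N:ℤ) ∣ (((l:ℕ):ℤ) - ((k:ℕ):ℤ) + ((j:ℕ):ℤ)) ↔ l = k - j := by
  have hN : 0 < N := Nat.pos_of_ne_zero (NeZero.ne N)
  have hl := l.isLt
  have hk := k.isLt
  have hj := j.isLt
  have hsub : ((k - j : Fin N) : ℕ) = (N - (j:ℕ) + (k:ℕ)) % N := by
    rw [Fin.sub_def]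
  have hmod : (N - (j:ℕ) + (k:ℕ)) % N = if N - (j:ℕ) + (k:ℕ) < N then N - (j:ℕ) + (k:ℕ) else N - (j:ℕ) + (k:ℕ) - N := by
    split_ifs with hlt
    · exact Nat.mod_eq_of_lt hlt
    · rw [Nat.mod_eq_sub_mod (le_of_not_gt hlt)]
      exact Nat.mod_eq_of_lt (by omega)
  rw [hmod] at hsub
  constructor
  · rintro ⟨c, hc⟩
    have hN' : (0:ℤ) < (N:ℤ) := by exact_mod_cast hN
    have hc0 : (0:ℤ) ≤ c := by nlinarith
    have hc1 : c ≤ 1 := by nlinarith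
    have hc01 : c = 0 ∨ c = 1 := by omega
    apply Fin.ext
    rw [hsub]
    rcases hc01 with rfl | rfl
    · split_ifs with hlt <;> omega
    · split_ifs with hlt <;> omega
  · intro h
    have hval : ((l:ℕ)) = if N - (j:ℕ) + (k:ℕ) < N then N - (j:ℕ) + (k:ℕ) else N - (j:ℕ) + (k:ℕ) - N := by
      rw [h, hsub]
    by_cases hlt : N - (j:ℕ) + (k:ℕ) < N
    · rw [if_pos hlt] at hval
      exact ⟨1, by omega⟩
    · rw [if_neg hlt] at hval
      exact ⟨0, by omega⟩

lemma conj_dft {N : ℕ} (z : Fin N → ℝ) (n : Fin N) :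
    (starRingEnd ℂ) (dft (fun k => (z k : ℂ)) n) =
      ∑ l : Fin N, (z l : ℂ) * Complex.exp (2 * Real.pi * Complex.I * ((l:ℕ):ℂ) * ((n:ℕ):ℂ) / (N:ℂ)) := by
  rw [dft, map_sum]
  refine Finset.sum_congr rfl fun l _ => ?_
  rw [map_mul, Complex.conj_ofReal, ← Complex.exp_conj]
  congr 1
  simp only [map_div₀, map_mul, map_neg, Complex.conj_I, Complex.conj_ofReal, map_ofNat,
    Complex.conj_natCast]
  ring

lemma key {N : ℕ} [NeZero N] (z : Fin N → ℝ) (j : Fin N) :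
    ∑ n : Fin N, (dft (fun k => (z k : ℂ)) n) * (starRingEnd ℂ) (dft (fun k => (z k : ℂ)) n) *
        Complex.exp (2 * Real.pi * Complex.I * ((n:ℕ):ℂ) * ((j:ℕ):ℂ) / (N:ℂ)) =
      (N : ℂ) * ((∑ k : Fin N, z k * z (k - j) : ℝ) : ℂ) := by
  have hN : N ≠ 0 := NeZero.ne N
  have step1 : ∀ n : Fin N,
      (dft (fun k => (z k : ℂ)) n) * (starRingEnd ℂ) (dft (fun k => (z k : ℂ)) n) *
        Complex.exp (2 * Real.pi * Complex.I * ((n:ℕ):ℂ) * ((j:ℕ):ℂ) / (N:ℂ)) =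
      ∑ k : Fin N, ∑ l : Fin N, (z k : ℂ) * (z l : ℂ) *
        Complex.exp (2 * Real.pi * Complex.I * ((n:ℕ):ℂ) * (((((l:ℕ):ℤ) - ((k:ℕ):ℤ) + ((j:ℕ):ℤ)):ℤ):ℂ) / (N:ℂ)) := by
    intro n
    rw [conj_dft, dft, Finset.sum_mul_sum, Finset.sum_mul]
    refine Finset.sum_congr rfl fun k _ => ?_
    rw [Finset.sum_mul]
    refine Finset.sum_congr rfl fun l _ => ?_
    have harg : -2 * (Real.pi:ℂ) * Complex.I * ((k:ℕ):ℂ) * ((n:ℕ):ℂ) / (N:ℂ) +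
        2 * (Real.pi:ℂ) * Complex.I * ((l:ℕ):ℂ) * ((n:ℕ):ℂ) / (N:ℂ) +
        2 * (Real.pi:ℂ) * Complex.I * ((n:ℕ):ℂ) * ((j:ℕ):ℂ) / (N:ℂ) =
        2 * (Real.pi:ℂ) * Complex.I * ((n:ℕ):ℂ) * (((((l:ℕ):ℤ) - ((k:ℕ):ℤ) + ((j:ℕ):ℤ)):ℤ):ℂ) / (N:ℂ) := by
      push_cast
      ring
    rw [← harg, Complex.exp_add, Complex.exp_add]
    ring
  rw [Finset.sum_congr rfl fun n _ => step1 n]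
  rw [Finset.sum_comm]
  have step2 : ∀ k : Fin N, ∑ n : Fin N, ∑ l : Fin N, (z k : ℂ) * (z l : ℂ) *
        Complex.exp (2 * Real.pi * Complex.I * ((n:ℕ):ℂ) * (((((l:ℕ):ℤ) - ((k:ℕ):ℤ) + ((j:ℕ):ℤ)):ℤ):ℂ) / (N:ℂ)) =
      (z k : ℂ) * (z (k - j) : ℂ) * (N:ℂ) := by
    intro k
    rw [Finset.sum_comm]
    have step3 : ∀ l : Fin N, ∑ n : Fin N, (z k : ℂ) * (z l : ℂ) *
        Complex.exp (2 * Real.pi * Complex.I * ((n:ℕ):ℂ) * (((((l:ℕ):ℤ) - ((k:ℕ):ℤ) + ((j:ℕ):ℤ)):ℤ):ℂ) / (N:ℂ)) =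
        if l = k - j then (z k : ℂ) * (z l : ℂ) * (N:ℂ) else 0 := by
      intro l
      rw [← Finset.mul_sum, orth N hN]
      simp only [dvd_iff_fin]
      split_ifs <;> simp
    rw [Finset.sum_congr rfl fun l _ => step3 l, Finset.sum_ite_eq' Finset.univ (k - j)]
    simp
  rw [Finset.sum_congr rfl fun k _ => step2 k]
  push_cast
  rw [Finset.mul_sum]
  exact Finset.sum_congr rfl fun k _ => by ring


section DdSection
variable {N : ℕ} [NeZero N]

def Dd (S : Finset (Fin N)) (j : Fin N) : ℕ :=
  (univ.filter fun k => k ∈ S ∧ k + j ∈ S).card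

lemma Dd_apply (S : Finset (Fin N)) (j : Fin N) :
    Dd S j = ∑ s ∈ S, (if s + j ∈ S then 1 else 0) := by
  rw [Dd, show (univ.filter fun k => k ∈ S ∧ k + j ∈ S) = S.filter (fun s => s + j ∈ S) by
    ext k; simp, Finset.card_filter]

lemma Dd_zero (S : Finset (Fin N)) : Dd S 0 = S.card := by
  rw [Dd_apply]
  rw [Finset.sum_congr rfl (fun s hs => by rw [if_pos (by simpa using hs)])]
  simp

lemma Dd_pos (S : Finset (Fin N)) (j : Fin N) (s : Fin N) (hs : s ∈ S) (hsj : s + j ∈ S) :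
    1 ≤ Dd S j := by
  rw [Dd]
  refine Finset.card_pos.mpr ⟨s, ?_⟩
  simp [hs, hsj]

lemma card_filter_shift (P : Fin N → Prop) [DecidablePred P] (g : Fin N) :
    (univ.filter fun k => P (k + g)).card = (univ.filter fun k => P k).card := by
  apply Finset.card_bij' (fun k _ => k + g) (fun k _ => k - g)
  · intro k hk; simpa using (Finset.mem_filter.mp hk).2
  · intro k hk
    simp only [Finset.mem_filter, Finset.mem_univ, true_and]
    have : k - g + g = k := by abel
    rw [this]
    exact (Finset.mem_filter.mp hk).2
  · intro k _; abel
  · intro k _; abel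

lemma mem_triple_iff (a b c j : Fin N) :
    a + j ∈ ({a, b, c} : Finset (Fin N)) ↔ j = 0 ∨ j = b - a ∨ j = c - a := by
  simp only [Finset.mem_insert, Finset.mem_singleton]
  constructor
  · rintro (h | h | h)
    · exact Or.inl (by rwa [add_eq_left] at h)
    · exact Or.inr (Or.inl (by rw [eq_sub_iff_add_eq, add_comm]; exact h))
    · exact Or.inr (Or.inr (by rw [eq_sub_iff_add_eq, add_comm]; exact h))
  · rintro (rfl | rfl | rfl)
    · simp
    · exact Or.inr (Or.inl (by abel))
    · exact Or.inr (Or.inr (by abel))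

lemma ind3 (j u v w : Fin N) (huv : u ≠ v) (huw : u ≠ w) (hvw : v ≠ w) :
    (if j = u ∨ j = v ∨ j = w then 1 else 0 : ℕ) =
      (if j = u then 1 else 0) + (if j = v then 1 else 0) + (if j = w then 1 else 0) := by
  by_cases h1 : j = u <;> by_cases h2 : j = v <;> by_cases h3 : j = w <;> simp_all

lemma ind2 (j u v : Fin N) (huv : u ≠ v) :
    (if j = u ∨ j = v then 1 else 0 : ℕ) = (if j = u then 1 else 0) + (if j = v then 1 else 0) := by
  by_cases h1 : j = u <;> by_cases h2 : j = v <;> simp_all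

lemma Dd_triple (a b c : Fin N) (hab : a ≠ b) (hac : a ≠ c) (hbc : b ≠ c) (j : Fin N) :
    Dd ({a, b, c} : Finset (Fin N)) j =
      ((if j = 0 then 1 else 0) + (if j = b - a then 1 else 0) + (if j = c - a then 1 else 0)) +
      ((if j = 0 then 1 else 0) + (if j = a - b then 1 else 0) + (if j = c - b then 1 else 0)) +
      ((if j = 0 then 1 else 0) + (if j = a - c then 1 else 0) + (if j = b - c then 1 else 0)) := by
  have hsub : ∀ u v : Fin N, u ≠ v → u - v ≠ 0 := fun u v h => sub_ne_zero_of_ne h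
  have hsub2 : ∀ u v w : Fin N, v ≠ w → v - u ≠ w - u := by
    intro u v w h hc
    exact h (by have := sub_left_injective (G := Fin N) hc; exact sub_left_inj.mp hc)
  rw [Dd_apply, Finset.sum_insert (by simp [hab, hac]), Finset.sum_insert (by simp [hbc]),
    Finset.sum_singleton]
  have e1 : (if a + j ∈ ({a,b,c} : Finset (Fin N)) then 1 else 0 : ℕ) =
      (if j = 0 then 1 else 0) + (if j = b - a then 1 else 0) + (if j = c - a then 1 else 0) := by
    rw [if_congr (mem_triple_iff a b c j) rfl rfl,
      ind3 j 0 (b-a) (c-a) (Ne.symm (hsub b a hab.symm)) (Ne.symm (hsub c a hac.symm))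
        (hsub2 a b c hbc)]
  have e2 : (if b + j ∈ ({a,b,c} : Finset (Fin N)) then 1 else 0 : ℕ) =
      (if j = 0 then 1 else 0) + (if j = a - b then 1 else 0) + (if j = c - b then 1 else 0) := by
    have : ({a,b,c} : Finset (Fin N)) = {b,a,c} := by ext t; simp; tauto
    rw [this, if_congr (mem_triple_iff b a c j) rfl rfl,
      ind3 j 0 (a-b) (c-b) (Ne.symm (hsub a b hab)) (Ne.symm (hsub c b hbc.symm))
        (hsub2 b a c hac)]
  have e3 : (if c + j ∈ ({a,b,c} : Finset (Fin N)) then 1 else 0 : ℕ) =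
      (if j = 0 then 1 else 0) + (if j = a - c then 1 else 0) + (if j = b - c then 1 else 0) := by
    have : ({a,b,c} : Finset (Fin N)) = {c,a,b} := by ext t; simp; tauto
    rw [this, if_congr (mem_triple_iff c a b j) rfl rfl,
      ind3 j 0 (a-c) (b-c) (Ne.symm (hsub a c hac)) (Ne.symm (hsub b c hbc))
        (hsub2 c a b hab)]
  rw [e1, e2, e3]; omega

lemma Dd_pair (a b : Fin N) (hab : a ≠ b) (j : Fin N) :
    Dd ({a, b} : Finset (Fin N)) j =
      ((if j = 0 then 1 else 0) + (if j = b - a then 1 else 0)) +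
      ((if j = 0 then 1 else 0) + (if j = a - b then 1 else 0)) := by
  have hsub : ∀ u v : Fin N, u ≠ v → u - v ≠ 0 := fun u v h => sub_ne_zero_of_ne h
  rw [Dd_apply, Finset.sum_insert (by simp [hab]), Finset.sum_singleton]
  have m1 : a + j ∈ ({a, b} : Finset (Fin N)) ↔ j = 0 ∨ j = b - a := by
    simp only [Finset.mem_insert, Finset.mem_singleton]
    constructor
    · rintro (h | h)
      · exact Or.inl (by rwa [add_eq_left] at h)
      · exact Or.inr (by rw [eq_sub_iff_add_eq, add_comm]; exact h)
    · rintro (rfl | rfl)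
      · simp
      · exact Or.inr (by abel)
  have m2 : b + j ∈ ({a, b} : Finset (Fin N)) ↔ j = 0 ∨ j = a - b := by
    simp only [Finset.mem_insert, Finset.mem_singleton]
    constructor
    · rintro (h | h)
      · exact Or.inr (by rw [eq_sub_iff_add_eq, add_comm]; exact h)
      · exact Or.inl (by rwa [add_eq_left] at h)
    · rintro (rfl | rfl)
      · simp
      · exact Or.inl (by abel)
  rw [if_congr m1 rfl rfl, if_congr m2 rfl rfl,
    ind2 j 0 (b-a) (Ne.symm (hsub b a hab.symm)), ind2 j 0 (a-b) (Ne.symm (hsub a b hab))]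

open Fin.CommRing in
lemma aux3 (a b c r : Fin N) (hab : a ≠ b) (hac : a ≠ c) (hbc : b ≠ c)
    (hra : r ≠ a) (hrb : r ≠ b)
    (hDd : ∀ j, Dd ({a,b,c} : Finset (Fin N)) j = Dd ({a,b,r} : Finset (Fin N)) j) :
    ∃ g : Fin N, ({a,b,r} : Finset (Fin N)) = ({a,b,c} : Finset (Fin N)).image (fun s => s + g) ∨
      ({a,b,r} : Finset (Fin N)) = ({a,b,c} : Finset (Fin N)).image (fun s => g - s) := by
  have H : ∀ j : Fin N,
      ((if j = c - a then 1 else 0) + (if j = c - b then 1 else 0) +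
        (if j = a - c then 1 else 0) + (if j = b - c then 1 else 0) : ℕ) =
      ((if j = r - a then 1 else 0) + (if j = r - b then 1 else 0) +
        (if j = a - r then 1 else 0) + (if j = b - r then 1 else 0)) := by
    intro j
    have h := hDd j
    rw [Dd_triple a b c hab hac hbc j, Dd_triple a b r hab hra.symm hrb.symm j] at h
    omega
  have himg_tr : ∀ (u v w g : Fin N), ({u,v,w} : Finset (Fin N)).image (fun s => s + g) =
      {u + g, v + g, w + g} := by
    intro u v w g
    simp [Finset.image_insert]
  have himg_re : ∀ (u v w g : Fin N), ({u,v,w} : Finset (Fin N)).image (fun s => g - s) =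
      {g - u, g - v, g - w} := by
    intro u v w g
    simp [Finset.image_insert]
  have h1 : r - a = c - a ∨ r - a = a - c ∨ r - a = c - b ∨ r - a = b - c := by
    by_contra hc
    push_neg at hc
    have h := H (r - a)
    rw [if_pos rfl, if_neg hc.1, if_neg hc.2.1, if_neg hc.2.2.1, if_neg hc.2.2.2] at h
    omega
  rcases h1 with h | h | h | h
  · -- r = c, T = S
    have : r = c := sub_left_inj.mp h
    subst this
    exact ⟨0, Or.inl (by rw [himg_tr]; simp)⟩
  · -- r - a = a - c
    have hneg : a - r = c - a := by linear_combination -h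
    have H2 : r - b = c - b ∨ r - b = b - c := by
      by_contra hc
      push_neg at hc
      have h2 := H (r - b)
      rw [if_pos rfl, if_neg hc.1, if_neg hc.2, ← h, ← hneg] at h2
      omega
    rcases H2 with hrb2 | hrb2
    · have : r = c := sub_left_inj.mp hrb2
      subst this
      exact ⟨0, Or.inl (by rw [himg_tr]; simp)⟩
    · have key : b - a = a - b := by linear_combination h - hrb2
      refine ⟨b + b, Or.inr ?_⟩
      rw [himg_re]
      have e1 : b + b - a = a := by linear_combination key
      have e2 : b + b - b = b := by abel
      have e3 : b + b - c = r := by linear_combination key - h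
      rw [e1, e2, e3]
  · -- r - a = c - b
    have hneg : a - r = b - c := by linear_combination -h
    have H3 : r - b = c - a ∨ r - b = a - c := by
      by_contra hc
      push_neg at hc
      have h3 := H (r - b)
      rw [if_pos rfl, if_neg hc.1, if_neg hc.2, ← h, ← hneg] at h3
      omega
    rcases H3 with hrb3 | hrb3
    · have key : b - a = a - b := by linear_combination h - hrb3
      refine ⟨a - b, Or.inl ?_⟩
      rw [himg_tr]
      have e1 : a + (a - b) = b := by linear_combination -key
      have e2 : b + (a - b) = a := by abel
      have e3 : c + (a - b) = r := by linear_combination -h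
      rw [e1, e2, e3]
      ext t; simp; tauto
    · refine ⟨a + b, Or.inr ?_⟩
      rw [himg_re]
      have e1 : a + b - a = b := by abel
      have e2 : a + b - b = a := by abel
      have e3 : a + b - c = r := by linear_combination -hrb3
      rw [e1, e2, e3]
      ext t; simp; tauto
  · -- r - a = b - c : reflection g = a + b
    refine ⟨a + b, Or.inr ?_⟩
    rw [himg_re]
    have e1 : a + b - a = b := by abel
    have e2 : a + b - b = a := by abel
    have e3 : a + b - c = r := by linear_combination -h
    rw [e1, e2, e3]
    ext t; simp; tauto

lemma img_tr (u v w g : Fin N) : ({u,v,w} : Finset (Fin N)).image (fun s => s + g) =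
    {u + g, v + g, w + g} := by simp [Finset.image_insert]

lemma exists_of_Dd_pos (S : Finset (Fin N)) (j : Fin N) (h : 1 ≤ Dd S j) :
    ∃ s, s ∈ S ∧ s + j ∈ S := by
  rw [Dd] at h
  obtain ⟨k, hk⟩ := Finset.card_pos.mp h
  exact ⟨k, (Finset.mem_filter.mp hk).2⟩

lemma Dd_shift (S : Finset (Fin N)) (g j : Fin N) :
    Dd (S.image (fun s => s + g)) j = Dd S j := by
  unfold Dd
  have hmem : ∀ k : Fin N, (k ∈ S.image (fun s => s + g)) ↔ k + -g ∈ S := by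
    intro k
    simp only [Finset.mem_image]
    constructor
    · rintro ⟨s, hs, rfl⟩
      have : s + g + -g = s := by abel
      rwa [this]
    · intro h
      exact ⟨k + -g, h, by abel⟩
  have hfe : (univ.filter fun k => k ∈ S.image (fun s => s + g) ∧ k + j ∈ S.image (fun s => s + g)) =
      (univ.filter fun k => ((k + -g) ∈ S) ∧ ((k + -g) + j ∈ S)) := by
    apply Finset.filter_congr
    intro k _
    rw [hmem, hmem]
    have : k + j + -g = k + -g + j := by abel
    rw [this]
  rw [hfe]
  exact card_filter_shift (fun m => m ∈ S ∧ m + j ∈ S) (-g)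

open Fin.CommRing in
lemma aux3' (a b c p q w : Fin N) (hab : a ≠ b) (hac : a ≠ c) (hbc : b ≠ c)
    (hpq : p ≠ q) (hpw : p ≠ w) (hqw : q ≠ w)
    (hd : q - p = b - a)
    (hDd : ∀ j, Dd ({a,b,c} : Finset (Fin N)) j = Dd ({p,q,w} : Finset (Fin N)) j) :
    ∃ g : Fin N, ({p,q,w} : Finset (Fin N)) = ({a,b,c} : Finset (Fin N)).image (fun s => s + g) ∨
      ({p,q,w} : Finset (Fin N)) = ({a,b,c} : Finset (Fin N)).image (fun s => g - s) := by
  set r := w + (a - p) with hr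
  have hTimg : ({p,q,w} : Finset (Fin N)).image (fun s => s + (a - p)) = {a, b, r} := by
    rw [img_tr]
    have e1 : p + (a - p) = a := by abel
    have e2 : q + (a - p) = b := by linear_combination hd
    rw [e1, e2]
  have hra : r ≠ a := by
    intro hcon
    have hwp : w = p := by linear_combination hcon
    exact hpw hwp.symm
  have hrb : r ≠ b := by
    intro hcon
    have hwq : w = q := by linear_combination hcon - hd
    exact hqw hwq.symm
  have hDd2 : ∀ j, Dd ({a,b,c} : Finset (Fin N)) j = Dd ({a,b,r} : Finset (Fin N)) j := by
    intro j
    rw [← hTimg, Dd_shift]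
    exact hDd j
  obtain ⟨g, hg⟩ := aux3 a b c r hab hac hbc hra hrb hDd2
  have hback : ({p,q,w} : Finset (Fin N)) = ({a,b,r} : Finset (Fin N)).image (fun s => s + (p - a)) := by
    rw [← hTimg, Finset.image_image]
    have : ((fun s => s + (p - a)) ∘ (fun s : Fin N => s + (a - p))) = id := by
      funext s
      show s + (a - p) + (p - a) = s
      abel
    rw [this, Finset.image_id]
  rcases hg with hg | hg
  · refine ⟨g + (p - a), Or.inl ?_⟩
    rw [hback, hg, Finset.image_image]
    congr 1
    funext s
    show s + g + (p - a) = s + (g + (p - a))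
    abel
  · refine ⟨g + (p - a), Or.inr ?_⟩
    rw [hback, hg, Finset.image_image]
    congr 1
    funext s
    show g - s + (p - a) = g + (p - a) - s
    abel

open Fin.CommRing in
lemma core (S T : Finset (Fin N)) (h3 : S.card ≤ 3) (hD : ∀ j, Dd S j = Dd T j) :
    ∃ g : Fin N, T = S.image (fun s => s + g) ∨ T = S.image (fun s => g - s) := by
  have hST : S.card = T.card := by rw [← Dd_zero S, ← Dd_zero T]; exact hD 0
  have hcases : S.card = 0 ∨ S.card = 1 ∨ S.card = 2 ∨ S.card = 3 := by omega
  rcases hcases with h0 | h1 | h2 | hc3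
  · have hS : S = ∅ := Finset.card_eq_zero.mp h0
    have hT : T = ∅ := Finset.card_eq_zero.mp (hST ▸ h0)
    exact ⟨0, Or.inl (by rw [hS, hT]; simp)⟩
  · obtain ⟨a, hS⟩ := Finset.card_eq_one.mp h1
    obtain ⟨p, hT⟩ := Finset.card_eq_one.mp (hST ▸ h1)
    refine ⟨p - a, Or.inl ?_⟩
    rw [hS, hT, Finset.image_singleton]
    congr 1
    abel
  · obtain ⟨a, b, hab, hS⟩ := Finset.card_eq_two.mp h2
    obtain ⟨u, v, huv, hT⟩ := Finset.card_eq_two.mp (hST ▸ h2)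
    have hTd : 1 ≤ Dd T (v - u) := by
      apply Dd_pos T (v - u) u (by rw [hT]; simp)
      rw [hT]
      have huvv : u + (v - u) = v := by abel
      rw [huvv]; simp
    have hSd : 1 ≤ Dd S (v - u) := by rw [hD]; exact hTd
    obtain ⟨s, hsS, hsS2⟩ := exists_of_Dd_pos S (v - u) hSd
    have hvu : v - u ≠ 0 := sub_ne_zero_of_ne huv.symm
    rw [hS] at hsS hsS2
    simp only [Finset.mem_insert, Finset.mem_singleton] at hsS hsS2
    rcases hsS with h | h
    all_goals rw [h] at hsS2
    · rcases hsS2 with hcon | hyes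
      · exact absurd (by rwa [add_eq_left] at hcon) hvu
      · refine ⟨u - a, Or.inl ?_⟩
        rw [hS, hT]
        rw [show ({a, b} : Finset (Fin N)).image (fun s => s + (u - a)) =
          {a + (u - a), b + (u - a)} by simp [Finset.image_insert]]
        have e1 : a + (u - a) = u := by abel
        have e2 : b + (u - a) = v := by linear_combination -hyes
        rw [e1, e2]
    · rcases hsS2 with hyes | hcon
      · refine ⟨a + u, Or.inr ?_⟩
        rw [hS, hT]
        rw [show ({a, b} : Finset (Fin N)).image (fun s => (a + u) - s) =
          {(a + u) - a, (a + u) - b} by simp [Finset.image_insert]]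
        have e1 : (a + u) - a = u := by abel
        have e2 : (a + u) - b = v := by linear_combination -hyes
        rw [e1, e2]
      · exact absurd (by rwa [add_eq_left] at hcon) hvu
  · obtain ⟨a, b, c, hab, hac, hbc, hS⟩ := Finset.card_eq_three.mp hc3
    obtain ⟨p, q, w, hpq, hpw, hqw, hT⟩ := Finset.card_eq_three.mp (hST ▸ hc3)
    have hTd : 1 ≤ Dd T (q - p) := by
      apply Dd_pos T (q - p) p (by rw [hT]; simp)
      rw [hT]
      have hpqq : p + (q - p) = q := by abel
      rw [hpqq]; simp
    have hSd : 1 ≤ Dd S (q - p) := by rw [hD]; exact hTd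
    obtain ⟨s, hsS, hsS2⟩ := exists_of_Dd_pos S (q - p) hSd
    have hqp : q - p ≠ 0 := sub_ne_zero_of_ne hpq.symm
    have hD' : ∀ j, Dd ({a,b,c} : Finset (Fin N)) j = Dd ({p,q,w} : Finset (Fin N)) j := by
      intro j
      rw [← hS, ← hT]
      exact hD j
    rw [hS] at hsS hsS2
    simp only [Finset.mem_insert, Finset.mem_singleton] at hsS hsS2
    rw [hS, hT]
    rcases hsS with h | h | h
    all_goals rw [h] at hsS2
    · rcases hsS2 with hcon | hd | hd
      · exact absurd (by rwa [add_eq_left] at hcon) hqp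
      · exact aux3' a b c p q w hab hac hbc hpq hpw hqw (by linear_combination hd) hD'
      · have hS2 : ({a,b,c} : Finset (Fin N)) = {a,c,b} := by ext t; simp; tauto
        rw [hS2]
        exact aux3' a c b p q w hac hab hbc.symm hpq hpw hqw (by linear_combination hd)
          (fun j => by rw [← hS2]; exact hD' j)
    · rcases hsS2 with hd | hcon | hd
      · have hS2 : ({a,b,c} : Finset (Fin N)) = {b,a,c} := by ext t; simp; tauto
        rw [hS2]
        exact aux3' b a c p q w hab.symm hbc hac hpq hpw hqw (by linear_combination hd)
          (fun j => by rw [← hS2]; exact hD' j)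
      · exact absurd (by rwa [add_eq_left] at hcon) hqp
      · have hS2 : ({a,b,c} : Finset (Fin N)) = {b,c,a} := by ext t; simp; tauto
        rw [hS2]
        exact aux3' b c a p q w hbc hab.symm hac.symm hpq hpw hqw (by linear_combination hd)
          (fun j => by rw [← hS2]; exact hD' j)
    · rcases hsS2 with hd | hd | hcon
      · have hS2 : ({a,b,c} : Finset (Fin N)) = {c,a,b} := by ext t; simp; tauto
        rw [hS2]
        exact aux3' c a b p q w hac.symm hbc.symm hab hpq hpw hqw (by linear_combination hd)
          (fun j => by rw [← hS2]; exact hD' j)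
      · have hS2 : ({a,b,c} : Finset (Fin N)) = {c,b,a} := by ext t; simp; tauto
        rw [hS2]
        exact aux3' c b a p q w hbc.symm hac.symm hab.symm hpq hpw hqw (by linear_combination hd)
          (fun j => by rw [← hS2]; exact hD' j)
      · exact absurd (by rwa [add_eq_left] at hcon) hqp

lemma Dd_compl (S : Finset (Fin N)) (j : Fin N) :
    Dd Sᶜ j + S.card + S.card = N + Dd S j := by
  classical
  set A := univ.filter (fun k : Fin N => k ∈ S) with hA0
  set B := univ.filter (fun k : Fin N => k + j ∈ S) with hB0
  have hAS : A = S := by ext k; simp [hA0]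
  have hA : A.card = S.card := by rw [hAS]
  have hB : B.card = S.card := by
    rw [hB0, card_filter_shift (fun m => m ∈ S) j, ← hA0, hAS]
  have h1 : Dd S j = (A ∩ B).card := by
    rw [Dd, hA0, hB0, ← Finset.filter_and]
  have h2 : Dd Sᶜ j = ((A ∪ B)ᶜ).card := by
    rw [Dd]
    congr 1
    ext k
    simp [hA0, hB0]
  have h3 := Finset.card_union_add_card_inter A B
  have h4 : ((A ∪ B)ᶜ).card = N - (A ∪ B).card := by
    rw [Finset.card_compl]
    simp
  have h5 : (A ∪ B).card ≤ N := by
    have := Finset.card_le_univ (A ∪ B)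
    simpa using this
  omega

lemma compl_image_add (S : Finset (Fin N)) (g : Fin N) :
    (Sᶜ.image (fun s => s + g)) = (S.image (fun s => s + g))ᶜ := by
  ext k
  simp only [Finset.mem_image, Finset.mem_compl]
  constructor
  · rintro ⟨s, hs, rfl⟩ ⟨t, ht, hteq⟩
    have : t = s := add_right_cancel hteq
    exact hs (this ▸ ht)
  · intro hk
    exact ⟨k + -g, fun hm => hk ⟨k + -g, hm, by abel⟩, by abel⟩

open Fin.CommRing in
lemma compl_image_sub (S : Finset (Fin N)) (g : Fin N) :
    (Sᶜ.image (fun s => g - s)) = (S.image (fun s => g - s))ᶜ := by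
  ext k
  simp only [Finset.mem_image, Finset.mem_compl]
  constructor
  · rintro ⟨s, hs, rfl⟩ ⟨t, ht, hteq⟩
    have : t = s := by linear_combination -hteq
    exact hs (this ▸ ht)
  · intro hk
    exact ⟨g - k, fun hm => hk ⟨g - k, hm, by abel⟩, by abel⟩

lemma bin_eq {u v : ℝ} (hu : u = 0 ∨ u = 1) (hv : v = 0 ∨ v = 1) (h : u ≠ 0 ↔ v ≠ 0) : u = v := by
  rcases hu with rfl | rfl <;> rcases hv with rfl | rfl <;> simp_all

lemma corr {N : ℕ} [NeZero N] (x y : Fin N → ℝ)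
    (h : ∀ n : Fin N, ‖dft (fun k => (x k : ℂ)) n‖ =
      ‖dft (fun k => (y k : ℂ)) n‖) (j : Fin N) :
    ∑ k : Fin N, x k * x (k - j) = ∑ k : Fin N, y k * y (k - j) := by
  have hNC : (N:ℂ) ≠ 0 := Nat.cast_ne_zero.mpr (NeZero.ne N)
  have hx := key x j
  have hy := key y j
  have heq : ∑ n : Fin N, (dft (fun k => (x k : ℂ)) n) * (starRingEnd ℂ) (dft (fun k => (x k : ℂ)) n) *
        Complex.exp (2 * Real.pi * Complex.I * ((n:ℕ):ℂ) * ((j:ℕ):ℂ) / (N:ℂ)) =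
      ∑ n : Fin N, (dft (fun k => (y k : ℂ)) n) * (starRingEnd ℂ) (dft (fun k => (y k : ℂ)) n) *
        Complex.exp (2 * Real.pi * Complex.I * ((n:ℕ):ℂ) * ((j:ℕ):ℂ) / (N:ℂ)) := by
    refine Finset.sum_congr rfl fun n _ => ?_
    rw [Complex.mul_conj, Complex.mul_conj, Complex.normSq_eq_norm_sq, Complex.normSq_eq_norm_sq, h n]
  have hNN : (N : ℂ) * ((∑ k : Fin N, x k * x (k - j) : ℝ) : ℂ) =
      (N : ℂ) * ((∑ k : Fin N, y k * y (k - j) : ℝ) : ℂ) := by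
    rw [← hx, ← hy]; exact heq
  have := mul_left_cancel₀ hNC hNN
  exact_mod_cast this

lemma sum_card {N : ℕ} [NeZero N] (x : Fin N → ℝ) (hx : ∀ k, x k = 0 ∨ x k = 1) (j : Fin N)
    (S : Finset (Fin N)) (hS : ∀ k, k ∈ S ↔ x k ≠ 0) :
    ∑ k : Fin N, x k * x (k - j) = ((Dd S j : ℕ) : ℝ) := by
  classical
  have h1 : ∀ k : Fin N, x k * x (k - j) = if (x k ≠ 0 ∧ x (k - j) ≠ 0) then 1 else 0 := by
    intro k
    rcases hx k with h | h <;> rcases hx (k - j) with h' | h' <;> simp [h, h']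
  rw [Finset.sum_congr rfl fun k _ => h1 k, Finset.sum_boole]
  congr 1
  rw [Dd]
  have hre : (univ.filter fun k : Fin N => x k ≠ 0 ∧ x (k - j) ≠ 0) =
      (univ.filter fun k : Fin N => ((k + -j) ∈ S ∧ (k + -j) + j ∈ S)) := by
    ext k
    simp only [Finset.mem_filter, Finset.mem_univ, true_and]
    rw [show k + -j + j = k from by abel, show k + -j = k - j from by abel, hS, hS]
    tauto
  rw [hre, card_filter_shift (fun m => m ∈ S ∧ m + j ∈ S) (-j)]

end DdSection
end Helpers

open scoped Classical in
/-- uniqueness up to trivial ambiguities for very sparse (or very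
dense) binary signals. -/
theorem sparse_binary_uniqueness {N : ℕ} [NeZero N] (x y : Fin N → ℝ)
    (hx : ∀ k, x k = 0 ∨ x k = 1) (hy : ∀ k, y k = 0 ∨ y k = 1)
    (h : ∀ n : Fin N, ‖dft (fun k => (x k : ℂ)) n‖ =
      ‖dft (fun k => (y k : ℂ)) n‖)
    (hcard : (Finset.univ.filter fun k => x k ≠ 0).card ∈
      ({0, 1, 2, 3, N - 3, N - 2, N - 1, N} : Set ℕ)) :
    ∃ k₀ : Fin N, (∀ k, y k = x (k + k₀)) ∨ (∀ k, y k = x (k₀ - k)) := by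
  classical
  obtain ⟨S, hS⟩ : ∃ S : Finset (Fin N), ∀ k, k ∈ S ↔ x k ≠ 0 :=
    ⟨univ.filter fun k => x k ≠ 0, fun k => by simp⟩
  obtain ⟨T, hT⟩ : ∃ T : Finset (Fin N), ∀ k, k ∈ T ↔ y k ≠ 0 :=
    ⟨univ.filter fun k => y k ≠ 0, fun k => by simp⟩
  have hDd : ∀ j, Dd S j = Dd T j := by
    intro j
    have hc := corr x y h j
    rw [sum_card x hx j S hS, sum_card y hy j T hT] at hc
    exact_mod_cast hc
  have hST : S.card = T.card := by rw [← Dd_zero S, ← Dd_zero T]; exact hDd 0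
  have hScard : S.card ∈ ({0, 1, 2, 3, N - 3, N - 2, N - 1, N} : Set ℕ) := by
    have : S = Finset.univ.filter fun k => x k ≠ 0 := by
      ext k; rw [hS]; simp
    rw [this]
    convert hcard using 3
  simp only [Set.mem_insert_iff, Set.mem_singleton_iff] at hScard
  have hSle : S.card ≤ N := by
    have := Finset.card_le_univ S
    simpa using this
  have hmain : ∃ g : Fin N, T = S.image (fun s => s + g) ∨ T = S.image (fun s => g - s) := by
    by_cases h3 : S.card ≤ 3
    · exact core S T h3 hDd
    · have hge : N - 3 ≤ S.card := by
        rcases hScard with hh|hh|hh|hh|hh|hh|hh|hh <;> omega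
      have hc3 : Sᶜ.card ≤ 3 := by
        rw [Finset.card_compl]
        simp only [Fintype.card_fin]
        omega
      have hDc : ∀ j, Dd Sᶜ j = Dd Tᶜ j := by
        intro j
        have h1 := Dd_compl S j
        have h2 := Dd_compl T j
        have h4 := hDd j
        omega
      obtain ⟨g, hg | hg⟩ := core Sᶜ Tᶜ hc3 hDc
      · rw [compl_image_add] at hg
        exact ⟨g, Or.inl (compl_injective hg)⟩
      · rw [compl_image_sub] at hg
        exact ⟨g, Or.inr (compl_injective hg)⟩
  obtain ⟨g, hg | hg⟩ := hmain
  · refine ⟨-g, Or.inl ?_⟩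
    intro k
    have hmem : y k ≠ 0 ↔ x (k + -g) ≠ 0 := by
      rw [← hT, ← hS, hg]
      simp only [Finset.mem_image]
      constructor
      · rintro ⟨s, hs, rfl⟩
        rwa [show s + g + -g = s from by abel]
      · intro hm
        exact ⟨k + -g, hm, by abel⟩
    exact bin_eq (hy k) (hx (k + -g)) hmem
  · refine ⟨g, Or.inr ?_⟩
    intro k
    have hmem : y k ≠ 0 ↔ x (g - k) ≠ 0 := by
      rw [← hT, ← hS, hg]
      simp only [Finset.mem_image]
      constructor
      · rintro ⟨s, hs, rfl⟩
        rwa [show g - (g - s) = s from by abel]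
      · intro hm
        exact ⟨g - k, hm, by abel⟩
    exact bin_eq (hy k) (hx (g - k)) hmem
end

section
/- Let N, W, L be positive integers with W ≥ L, and let w ∈ ℂ^W be a constant window, i.e. w_k = a for all k = 0,…,W−1 for some fixed a ≠ 0, extended by w_k := 0 for k < 0 and k > W−1. Let R = ⌈(N+W−1)/L⌉. Let x ∈ {0,1}^N be a binary vector and y ∈ ℝ^N with 0 ≤ y_k ≤ 1 for all k. If the short-time Fourier transform magnitudes agree, i.e. |∑_{k=0}^{N−1} x_k w_{mL−k} e^{−2πikn/N}| = |∑_{k=0}^{N−1} y_k w_{mL−k} e^{−2πikn/N}| for all n = 0,…,N−1 and m = 0,…,R−1, then y_k ∈ {0,1} for all k. -/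
open scoped BigOperators
open Finset

-- orthogonality of characters
lemma char_sum {N : ℕ} (hN : N ≠ 0) (k j : Fin N) :
    ∑ n : Fin N, Complex.exp (-2 * Real.pi * Complex.I * ((k:ℕ):ℂ) * ((n:ℕ):ℂ) / (N:ℂ)) *
      (starRingEnd ℂ) (Complex.exp (-2 * Real.pi * Complex.I * ((j:ℕ):ℂ) * ((n:ℕ):ℂ) / (N:ℂ)))
      = if k = j then (N:ℂ) else 0 := by
  have hNC : (N:ℂ) ≠ 0 := Nat.cast_ne_zero.mpr hN
  set r : ℂ := Complex.exp (2 * Real.pi * Complex.I * (((j:ℕ):ℂ) - ((k:ℕ):ℂ)) / (N:ℂ)) with hr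
  have hterm : ∀ n : Fin N,
      Complex.exp (-2 * Real.pi * Complex.I * ((k:ℕ):ℂ) * ((n:ℕ):ℂ) / (N:ℂ)) *
      (starRingEnd ℂ) (Complex.exp (-2 * Real.pi * Complex.I * ((j:ℕ):ℂ) * ((n:ℕ):ℂ) / (N:ℂ)))
      = r ^ (n:ℕ) := by
    intro n
    rw [← Complex.exp_conj, ← Complex.exp_add, ← Complex.exp_nat_mul]
    congr 1
    simp only [map_div₀, map_mul, Complex.conj_I, map_neg, map_ofNat, Complex.conj_ofReal,
      Complex.conj_natCast]
    field_simp
    ring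
  rw [Finset.sum_congr rfl (fun n _ => hterm n), Fin.sum_univ_eq_sum_range (fun i => r ^ i)]
  by_cases hkj : k = j
  · subst hkj
    simp [hr]
  · rw [if_neg hkj]
    have hr1 : r ≠ 1 := by
      intro h1
      rw [hr, Complex.exp_eq_one_iff] at h1
      obtain ⟨t, ht⟩ := h1
      have h2pi : (2 * (Real.pi:ℂ) * Complex.I) ≠ 0 := by
        simpa [mul_comm] using Complex.two_pi_I_ne_zero
      have : (((j:ℕ):ℂ) - ((k:ℕ):ℂ)) = t * N := by
        field_simp at ht
        apply mul_left_cancel₀ h2pi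
        linear_combination (2 * (Real.pi:ℂ) * Complex.I) * ht
      have hZ : ((j:ℕ):ℤ) - ((k:ℕ):ℤ) = t * N := by exact_mod_cast this
      have hj := j.isLt; have hk := k.isLt
      have : (j:ℕ) ≠ (k:ℕ) := fun hh => hkj (Fin.ext hh.symm)
      have hNpos : (0:ℤ) < N := by exact_mod_cast Nat.pos_of_ne_zero hN
      rcases lt_trichotomy t 0 with h|h|h
      · have ht1 : t ≤ -1 := by omega
        nlinarith
      · subst h; simp at hZ; omega
      · have ht1 : 1 ≤ t := by omega
        nlinarith
    have hrN : r ^ N = 1 := by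
      rw [hr, ← Complex.exp_nat_mul]
      have : (N:ℂ) * (2 * Real.pi * Complex.I * (((j:ℕ):ℂ) - ((k:ℕ):ℂ)) / (N:ℂ))
          = (((j:ℤ) - (k:ℤ) : ℤ):ℂ) * (2 * Real.pi * Complex.I) := by
        push_cast; field_simp
      rw [this, Complex.exp_int_mul_two_pi_mul_I]
    rw [geom_sum_eq hr1, hrN]
    simp

lemma parseval {N : ℕ} (hN : N ≠ 0) (z : Fin N → ℂ) :
    ∑ n : Fin N, ‖dft z n‖ ^ 2 = N * ∑ k : Fin N, ‖z k‖ ^ 2 := by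
  have key : ((∑ n : Fin N, ‖dft z n‖ ^ 2 : ℝ) : ℂ)
      = ((N * ∑ k : Fin N, ‖z k‖ ^ 2 : ℝ) : ℂ) := by
    push_cast
    have habs : ∀ w : ℂ, ((‖w‖ : ℝ) : ℂ) ^ 2 = w * (starRingEnd ℂ) w := by
      intro w; rw [← Complex.ofReal_pow, Complex.sq_norm, ← Complex.mul_conj]
    simp only [habs]
    unfold dft
    have expand : ∀ n : Fin N,
        (∑ k : Fin N, z k * Complex.exp (-2 * Real.pi * Complex.I * ((k:ℕ):ℂ) * ((n:ℕ):ℂ) / (N:ℂ))) *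
        (starRingEnd ℂ) (∑ k : Fin N, z k * Complex.exp (-2 * Real.pi * Complex.I * ((k:ℕ):ℂ) * ((n:ℕ):ℂ) / (N:ℂ)))
        = ∑ k : Fin N, ∑ j : Fin N, (z k * (starRingEnd ℂ) (z j)) *
            (Complex.exp (-2 * Real.pi * Complex.I * ((k:ℕ):ℂ) * ((n:ℕ):ℂ) / (N:ℂ)) *
             (starRingEnd ℂ) (Complex.exp (-2 * Real.pi * Complex.I * ((j:ℕ):ℂ) * ((n:ℕ):ℂ) / (N:ℂ)))) := by
      intro n
      rw [map_sum, Finset.sum_mul_sum]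
      apply Finset.sum_congr rfl; intro k _
      apply Finset.sum_congr rfl; intro j _
      rw [map_mul]; ring
    simp only [expand]
    rw [Finset.sum_comm]
    have inner : ∀ k : Fin N,
        ∑ n : Fin N, ∑ j : Fin N, (z k * (starRingEnd ℂ) (z j)) *
            (Complex.exp (-2 * Real.pi * Complex.I * ((k:ℕ):ℂ) * ((n:ℕ):ℂ) / (N:ℂ)) *
             (starRingEnd ℂ) (Complex.exp (-2 * Real.pi * Complex.I * ((j:ℕ):ℂ) * ((n:ℕ):ℂ) / (N:ℂ))))
        = (N:ℂ) * (z k * (starRingEnd ℂ) (z k)) := by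
      intro k
      rw [Finset.sum_comm]
      have : ∀ j : Fin N, ∑ n : Fin N, (z k * (starRingEnd ℂ) (z j)) *
            (Complex.exp (-2 * Real.pi * Complex.I * ((k:ℕ):ℂ) * ((n:ℕ):ℂ) / (N:ℂ)) *
             (starRingEnd ℂ) (Complex.exp (-2 * Real.pi * Complex.I * ((j:ℕ):ℂ) * ((n:ℕ):ℂ) / (N:ℂ))))
          = (z k * (starRingEnd ℂ) (z j)) * (if k = j then (N:ℂ) else 0) := by
        intro j
        rw [← Finset.mul_sum, char_sum hN]
      simp only [this]
      rw [Finset.sum_eq_single k]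
      · norm_num; ring
      · intro j _ hj; rw [if_neg fun hh => hj hh.symm, mul_zero]
      · intro hk; exact absurd (Finset.mem_univ k) hk
    simp only [inner]
    rw [← Finset.mul_sum]
  exact_mod_cast key

/-- box relaxation for binary signals under STFT magnitudes with
a nonzero constant window of length `W ≥ L`. -/
theorem box_to_binary_stft {N W L : ℕ} [NeZero N] (hW : 0 < W) (hL : 0 < L)
    (hWL : L ≤ W) (a : ℂ) (ha : a ≠ 0) (x y : Fin N → ℝ)
    (hx : ∀ k, x k = 0 ∨ x k = 1) (hy : ∀ k, 0 ≤ y k ∧ y k ≤ 1)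
    (h : ∀ m : ℕ, m < (N + W - 1 + L - 1) / L → ∀ n : Fin N,
      ‖(∑ k : Fin N, (x k : ℂ) * win W a ((m * L : ℤ) - ((k : ℕ) : ℤ)) *
        Complex.exp (-2 * Real.pi * Complex.I * ((k : ℕ) : ℂ) * ((n : ℕ) : ℂ) / (N : ℂ)))‖ =
      ‖(∑ k : Fin N, (y k : ℂ) * win W a ((m * L : ℤ) - ((k : ℕ) : ℤ)) *
        Complex.exp (-2 * Real.pi * Complex.I * ((k : ℕ) : ℂ) * ((n : ℕ) : ℂ) / (N : ℂ)))‖) :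
    ∀ k, y k = 0 ∨ y k = 1 := by
  classical
  have hN : N ≠ 0 := NeZero.ne N
  set R : ℕ := (N + W - 1 + L - 1) / L with hR
  set ind : ℕ → Fin N → ℝ := fun m k =>
    if 0 ≤ (m * L : ℤ) - ((k : ℕ) : ℤ) ∧ (m * L : ℤ) - ((k : ℕ) : ℤ) < (W : ℤ) then 1 else 0
    with hind
  have hind01 : ∀ m k, ind m k = 0 ∨ ind m k = 1 := by
    intro m k; rw [hind]; dsimp only
    split <;> simp
  have hindnn : ∀ m k, 0 ≤ ind m k := by
    intro m k; rcases hind01 m k with h' | h' <;> simp [h']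
  have hwin : ∀ (m : ℕ) (k : Fin N),
      win W a ((m * L : ℤ) - ((k : ℕ) : ℤ)) = a * ((ind m k : ℝ) : ℂ) := by
    intro m k
    rw [hind]; dsimp only; unfold win
    by_cases hc : 0 ≤ (m * L : ℤ) - ((k : ℕ) : ℤ) ∧ (m * L : ℤ) - ((k : ℕ) : ℤ) < (W : ℤ)
    · rw [if_pos hc, if_pos hc]; norm_num
    · rw [if_neg hc, if_neg hc]; norm_num
  -- Step 1: linear relation from frequency n = 0
  have hsum0 : ∀ (v : Fin N → ℝ) (m : ℕ),
      (∑ k : Fin N, (v k : ℂ) * win W a ((m * L : ℤ) - ((k : ℕ) : ℤ)) *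
        Complex.exp (-2 * Real.pi * Complex.I * ((k : ℕ) : ℂ) * (((0 : Fin N) : ℕ) : ℂ) / (N : ℂ)))
      = a * ((∑ k : Fin N, v k * ind m k : ℝ) : ℂ) := by
    intro v m
    rw [Complex.ofReal_sum, Finset.mul_sum]
    apply Finset.sum_congr rfl
    intro k _
    rw [hwin]
    simp [Fin.val_zero]
    push_cast
    ring
  have L1 : ∀ m < R, ∑ k : Fin N, x k * ind m k = ∑ k : Fin N, y k * ind m k := by
    intro m hm
    have h0 := h m hm (0 : Fin N)
    rw [hsum0 x m, hsum0 y m, norm_mul, norm_mul, Complex.norm_real, Complex.norm_real,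
      Real.norm_eq_abs, Real.norm_eq_abs] at h0
    have hxnn : 0 ≤ ∑ k : Fin N, x k * ind m k := by
      apply Finset.sum_nonneg; intro k _
      rcases hx k with h' | h' <;> simp [h', hindnn m k]
    have hynn : 0 ≤ ∑ k : Fin N, y k * ind m k := by
      apply Finset.sum_nonneg; intro k _
      exact mul_nonneg (hy k).1 (hindnn m k)
    rw [abs_of_nonneg hxnn, abs_of_nonneg hynn] at h0
    have haa : ‖a‖ ≠ 0 := by simpa using ha
    exact mul_left_cancel₀ haa h0
  -- Step 2: quadratic relation from Parseval
  have L2 : ∀ m < R, ∑ k : Fin N, (x k) ^ 2 * ind m k = ∑ k : Fin N, (y k) ^ 2 * ind m k := by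
    intro m hm
    have hP1 := parseval hN (fun k : Fin N => (x k : ℂ) * win W a ((m * L : ℤ) - ((k : ℕ) : ℤ)))
    have hP2 := parseval hN (fun k : Fin N => (y k : ℂ) * win W a ((m * L : ℤ) - ((k : ℕ) : ℤ)))
    have hsum : ∑ n : Fin N,
        ‖dft (fun k : Fin N => (x k : ℂ) * win W a ((m * L : ℤ) - ((k : ℕ) : ℤ))) n‖ ^ 2
        = ∑ n : Fin N,
        ‖dft (fun k : Fin N => (y k : ℂ) * win W a ((m * L : ℤ) - ((k : ℕ) : ℤ))) n‖ ^ 2 := by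
      apply Finset.sum_congr rfl
      intro n _
      have := h m hm n
      simp only [dft]
      rw [this]
    rw [hP1, hP2] at hsum
    have hNR : ((N : ℝ)) ≠ 0 := Nat.cast_ne_zero.mpr hN
    have hsum2 := mul_left_cancel₀ hNR hsum
    have habs2 : ∀ (v : Fin N → ℝ) (k : Fin N),
        ‖(v k : ℂ) * win W a ((m * L : ℤ) - ((k : ℕ) : ℤ))‖ ^ 2
        = ‖a‖ ^ 2 * ((v k) ^ 2 * ind m k) := by
      intro v k
      have hii : |ind m k| ^ 2 = ind m k := by
        rcases hind01 m k with h' | h' <;> simp [h']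
      rw [hwin, norm_mul, norm_mul, Complex.norm_real, Complex.norm_real, Real.norm_eq_abs,
        Real.norm_eq_abs, mul_pow, mul_pow,
        _root_.sq_abs, hii]
      ring
    simp only [habs2] at hsum2
    rw [← Finset.mul_sum, ← Finset.mul_sum] at hsum2
    have haa2 : ‖a‖ ^ 2 ≠ 0 := pow_ne_zero 2 (by simpa using ha)
    exact mul_left_cancel₀ haa2 hsum2
  -- Step 3: combine
  have hzero : ∀ m < R, ∑ k : Fin N, (y k - (y k) ^ 2) * ind m k = 0 := by
    intro m hm
    have e : ∑ k : Fin N, (y k - (y k) ^ 2) * ind m k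
        = ∑ k : Fin N, (x k - (x k) ^ 2) * ind m k := by
      simp only [sub_mul, Finset.sum_sub_distrib]
      rw [L1 m hm, L2 m hm]
    rw [e]
    apply Finset.sum_eq_zero
    intro k _
    rcases hx k with h' | h' <;> simp [h']
  have htotal : ∑ k : Fin N, (y k - (y k) ^ 2) * (∑ m ∈ Finset.range R, ind m k) = 0 := by
    have : ∑ m ∈ Finset.range R, ∑ k : Fin N, (y k - (y k) ^ 2) * ind m k = 0 := by
      apply Finset.sum_eq_zero
      intro m hm
      exact hzero m (Finset.mem_range.mp hm)
    rw [Finset.sum_comm] at this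
    calc ∑ k : Fin N, (y k - (y k) ^ 2) * (∑ m ∈ Finset.range R, ind m k)
        = ∑ k : Fin N, ∑ m ∈ Finset.range R, (y k - (y k) ^ 2) * ind m k := by
          apply Finset.sum_congr rfl; intro k _; rw [Finset.mul_sum]
      _ = 0 := this
  have hynn2 : ∀ k : Fin N, 0 ≤ y k - (y k) ^ 2 := by
    intro k; nlinarith [(hy k).1, (hy k).2]
  have hterm : ∀ k ∈ Finset.univ, (y k - (y k) ^ 2) * (∑ m ∈ Finset.range R, ind m k) = 0 := by
    rw [← Finset.sum_eq_zero_iff_of_nonneg]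
    · exact htotal
    · intro k _
      exact mul_nonneg (hynn2 k) (Finset.sum_nonneg fun m _ => hindnn m k)
  -- Step 4: each index is covered by some window
  intro k
  set q : ℕ := ((k : ℕ) + L - 1) / L with hq
  set t : ℕ := q * L with ht
  have hqk : (k : ℕ) ≤ t ∧ t ≤ (k : ℕ) + L - 1 := by
    have hdm : t + ((k : ℕ) + L - 1) % L = (k : ℕ) + L - 1 := by
      rw [ht, hq]; exact Nat.div_add_mod' _ _
    have hmod : ((k : ℕ) + L - 1) % L < L := Nat.mod_lt _ hL
    omega
  have hqR : q < R := by
    have hstep : (q + 1) * L = t + L := by rw [ht]; ring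
    have hkN := k.isLt
    have h2 : (q + 1) * L ≤ N + W - 1 + L - 1 := by
      rw [hstep]; omega
    rw [hR]
    exact (Nat.le_div_iff_mul_le hL).mpr h2
  have hcast : ((q : ℤ) * (L : ℤ)) = (t : ℤ) := by rw [ht]; push_cast; ring
  have hindq : ind q k = 1 := by
    rw [hind]; dsimp only
    rw [if_pos]
    rw [hcast]
    constructor
    · omega
    · omega
  have hge1 : (1 : ℝ) ≤ ∑ m ∈ Finset.range R, ind m k :=
    hindq ▸ Finset.single_le_sum (f := fun m => ind m k)
      (fun m _ => hindnn m k) (Finset.mem_range.mpr hqR)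
  have hk0 := hterm k (Finset.mem_univ k)
  have hsne : (∑ m ∈ Finset.range R, ind m k) ≠ 0 := by linarith
  have hy0 : y k - (y k) ^ 2 = 0 := by
    rcases mul_eq_zero.mp hk0 with h' | h'
    · exact h'
    · exact absurd h' hsne
  have : y k * (1 - y k) = 0 := by nlinarith [hy0]
  rcases mul_eq_zero.mp this with h' | h'
  · exact Or.inl h'
  · right; linarith
end

section
/- Let N be a positive integer, ε > 0, and x ∈ ℂ^N with x ≠ 0. Let b ∈ ℝ^N be defined by b_n = |(F x)_n|, and let b̃ = b + η for some η ∈ ℂ^N. If ‖η‖_∞ < min{ ε/(4‖b‖_∞), ε/2, 1 }, then ‖F⁻¹(b̃ ⊙ b̃) − Aut_p(x)‖_∞ < ε, where b̃ ⊙ b̃ denotes the entrywise product. -/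
open scoped BigOperators
open Finset

lemma sum_exp_int (N : ℕ) [NeZero N] (m : ℤ) :
    ∑ n : Fin N, Complex.exp (2 * Real.pi * Complex.I * (m : ℂ) * ((n:ℕ):ℂ) / (N : ℂ)) =
      if (N:ℤ) ∣ m then (N:ℂ) else 0 := by
  have hN : (N:ℂ) ≠ 0 := Nat.cast_ne_zero.mpr (NeZero.ne N)
  set ζ : ℂ := Complex.exp (2 * Real.pi * Complex.I * (m:ℂ) / (N:ℂ)) with hζ
  have hterm : ∀ n : Fin N,
      Complex.exp (2 * Real.pi * Complex.I * (m : ℂ) * ((n:ℕ):ℂ) / (N : ℂ)) = ζ ^ (n:ℕ) := by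
    intro n
    rw [hζ, ← Complex.exp_nat_mul]
    ring_nf
  rw [Finset.sum_congr rfl fun n _ => hterm n]
  rw [Fin.sum_univ_eq_sum_range (fun i => ζ ^ i) N]
  have hζN : ζ ^ N = 1 := by
    rw [hζ, ← Complex.exp_nat_mul]
    have : (N:ℂ) * (2 * ↑Real.pi * Complex.I * ↑m / ↑N) = (m:ℂ) * (2 * ↑Real.pi * Complex.I) := by
      field_simp
    rw [this, Complex.exp_int_mul_two_pi_mul_I]
  by_cases h : (N:ℤ) ∣ m
  · rw [if_pos h]
    obtain ⟨c, hc⟩ := h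
    have hz1 : ζ = 1 := by
      rw [hζ, hc]
      have : 2 * (Real.pi:ℂ) * Complex.I * ((N:ℤ) * c : ℤ) / (N:ℂ) = (c:ℂ) * (2 * Real.pi * Complex.I) := by
        push_cast
        field_simp
      rw [this, Complex.exp_int_mul_two_pi_mul_I]
    simp [hz1]
  · have hζ1 : ζ ≠ 1 := by
      intro h1
      rw [hζ, Complex.exp_eq_one_iff] at h1
      obtain ⟨c, hc⟩ := h1
      apply h
      refine ⟨c, ?_⟩
      have hπ : (Real.pi:ℂ) ≠ 0 := by exact_mod_cast Real.pi_ne_zero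
      have key : (2 * (Real.pi:ℂ) * Complex.I) * (m:ℂ) = (2 * (Real.pi:ℂ) * Complex.I) * ((N:ℂ) * c) := by
        field_simp at hc
        linear_combination (2 * (Real.pi:ℂ) * Complex.I) * hc
      have h2 : (2 * (Real.pi:ℂ) * Complex.I) ≠ 0 := by
        simp [Complex.I_ne_zero, hπ]
      have : (m:ℂ) = (N:ℂ) * c := mul_left_cancel₀ h2 key
      exact_mod_cast this
    rw [geom_sum_eq hζ1, hζN]
    simp [h]

lemma fin_dvd_iff {N : ℕ} [NeZero N] (k l j : Fin N) :
    (N:ℤ) ∣ (((j:ℕ):ℤ) - ((k:ℕ):ℤ) + ((l:ℕ):ℤ)) ↔ k = l + j := by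
  have hN : 0 < N := Nat.pos_of_ne_zero (NeZero.ne N)
  have hk := k.isLt; have hl := l.isLt; have hj := j.isLt
  have hadd : ((l + j : Fin N) : ℕ) = ((l:ℕ) + (j:ℕ)) % N := by
    rw [Fin.val_add]
  constructor
  · rintro ⟨c, hc⟩
    have h1 : (-1 : ℤ) < c := by nlinarith
    have h2 : c < 2 := by nlinarith
    interval_cases c
    · apply Fin.ext
      rw [hadd]
      have : (k:ℕ) = (l:ℕ) + (j:ℕ) := by omega
      rw [← this, Nat.mod_eq_of_lt hk]
    · apply Fin.ext
      rw [hadd]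
      have h3 : (l:ℕ) + (j:ℕ) = (k:ℕ) + N := by omega
      rw [h3, Nat.add_mod_right, Nat.mod_eq_of_lt hk]
  · rintro rfl
    rw [hadd]
    have : (((l:ℕ) + (j:ℕ)) % N : ℕ) = (((l:ℕ):ℤ) + ((j:ℕ):ℤ)) % (N:ℤ) := by
      push_cast
      ring
    rw [this]
    have hdef : (((l:ℕ):ℤ) + ((j:ℕ):ℤ)) % (N:ℤ)
        = ((l:ℕ):ℤ) + ((j:ℕ):ℤ) - (N:ℤ) * ((((l:ℕ):ℤ) + ((j:ℕ):ℤ)) / (N:ℤ)) := by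
      rw [Int.emod_def]
    rw [hdef]
    exact ⟨(((l:ℕ):ℤ) + ((j:ℕ):ℤ)) / (N:ℤ), by ring⟩

lemma wk {N : ℕ} [NeZero N] (x : Fin N → ℂ) (j : Fin N) :
    idft (fun n => dft x n * (starRingEnd ℂ) (dft x n)) j = autp x j := by
  have hN : (N:ℂ) ≠ 0 := Nat.cast_ne_zero.mpr (NeZero.ne N)
  have hconj : ∀ n : Fin N, (starRingEnd ℂ) (dft x n) =
      ∑ l : Fin N, (starRingEnd ℂ) (x l) *
        Complex.exp (2 * Real.pi * Complex.I * ((l:ℕ):ℂ) * ((n:ℕ):ℂ) / (N:ℂ)) := by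
    intro n
    unfold dft
    rw [map_sum]
    refine Finset.sum_congr rfl fun l _ => ?_
    rw [map_mul, ← Complex.exp_conj]
    congr 1
    simp only [map_div₀, map_mul, map_neg, map_ofNat, Complex.conj_I, Complex.conj_ofReal,
      Complex.conj_natCast]
    ring
  have hprod : ∀ (n k l : Fin N),
      (x k * Complex.exp (-2 * Real.pi * Complex.I * ((k:ℕ):ℂ) * ((n:ℕ):ℂ) / (N:ℂ))) *
        ((starRingEnd ℂ) (x l) * Complex.exp (2 * Real.pi * Complex.I * ((l:ℕ):ℂ) * ((n:ℕ):ℂ) / (N:ℂ))) *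
        Complex.exp (2 * Real.pi * Complex.I * ((j:ℕ):ℂ) * ((n:ℕ):ℂ) / (N:ℂ))
      = x k * (starRingEnd ℂ) (x l) *
        Complex.exp (2 * Real.pi * Complex.I * (((((j:ℕ):ℤ) - ((k:ℕ):ℤ) + ((l:ℕ):ℤ)) : ℤ) : ℂ) * ((n:ℕ):ℂ) / (N:ℂ)) := by
    intro n k l
    have e : Complex.exp (-2 * Real.pi * Complex.I * ((k:ℕ):ℂ) * ((n:ℕ):ℂ) / (N:ℂ)) *
        Complex.exp (2 * Real.pi * Complex.I * ((l:ℕ):ℂ) * ((n:ℕ):ℂ) / (N:ℂ)) *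
        Complex.exp (2 * Real.pi * Complex.I * ((j:ℕ):ℂ) * ((n:ℕ):ℂ) / (N:ℂ))
        = Complex.exp (2 * Real.pi * Complex.I * (((((j:ℕ):ℤ) - ((k:ℕ):ℤ) + ((l:ℕ):ℤ)) : ℤ) : ℂ) * ((n:ℕ):ℂ) / (N:ℂ)) := by
      rw [← Complex.exp_add, ← Complex.exp_add]
      congr 1
      push_cast
      ring
    calc _ = x k * (starRingEnd ℂ) (x l) *
        (Complex.exp (-2 * Real.pi * Complex.I * ((k:ℕ):ℂ) * ((n:ℕ):ℂ) / (N:ℂ)) *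
         Complex.exp (2 * Real.pi * Complex.I * ((l:ℕ):ℂ) * ((n:ℕ):ℂ) / (N:ℂ)) *
         Complex.exp (2 * Real.pi * Complex.I * ((j:ℕ):ℂ) * ((n:ℕ):ℂ) / (N:ℂ))) := by ring
      _ = _ := by rw [e]
  unfold idft
  have main : ∑ n : Fin N, (dft x n * (starRingEnd ℂ) (dft x n)) *
      Complex.exp (2 * Real.pi * Complex.I * ((j:ℕ):ℂ) * ((n:ℕ):ℂ) / (N:ℂ))
      = ∑ l : Fin N, (x (l + j) * (starRingEnd ℂ) (x l)) * (N:ℂ) := by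
    calc ∑ n : Fin N, (dft x n * (starRingEnd ℂ) (dft x n)) *
          Complex.exp (2 * Real.pi * Complex.I * ((j:ℕ):ℂ) * ((n:ℕ):ℂ) / (N:ℂ))
        = ∑ n : Fin N, ∑ k : Fin N, ∑ l : Fin N, x k * (starRingEnd ℂ) (x l) *
            Complex.exp (2 * Real.pi * Complex.I * (((((j:ℕ):ℤ) - ((k:ℕ):ℤ) + ((l:ℕ):ℤ)) : ℤ) : ℂ) * ((n:ℕ):ℂ) / (N:ℂ)) := by
          refine Finset.sum_congr rfl fun n _ => ?_
          rw [hconj n]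
          show (dft x n) * _ * _ = _
          unfold dft
          rw [Finset.sum_mul_sum, Finset.sum_mul]
          refine Finset.sum_congr rfl fun k _ => ?_
          rw [Finset.sum_mul]
          exact Finset.sum_congr rfl fun l _ => hprod n k l
      _ = ∑ k : Fin N, ∑ l : Fin N, ∑ n : Fin N, x k * (starRingEnd ℂ) (x l) *
            Complex.exp (2 * Real.pi * Complex.I * (((((j:ℕ):ℤ) - ((k:ℕ):ℤ) + ((l:ℕ):ℤ)) : ℤ) : ℂ) * ((n:ℕ):ℂ) / (N:ℂ)) := by
          rw [Finset.sum_comm]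
          exact Finset.sum_congr rfl fun k _ => Finset.sum_comm
      _ = ∑ k : Fin N, ∑ l : Fin N, x k * (starRingEnd ℂ) (x l) *
            (if (N:ℤ) ∣ (((j:ℕ):ℤ) - ((k:ℕ):ℤ) + ((l:ℕ):ℤ)) then (N:ℂ) else 0) := by
          refine Finset.sum_congr rfl fun k _ => Finset.sum_congr rfl fun l _ => ?_
          rw [← Finset.mul_sum, sum_exp_int]
      _ = ∑ l : Fin N, ∑ k : Fin N, x k * (starRingEnd ℂ) (x l) *
            (if k = l + j then (N:ℂ) else 0) := by
          rw [Finset.sum_comm]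
          refine Finset.sum_congr rfl fun l _ => Finset.sum_congr rfl fun k _ => ?_
          rw [if_congr (fin_dvd_iff k l j) rfl rfl]
      _ = ∑ l : Fin N, (x (l + j) * (starRingEnd ℂ) (x l)) * (N:ℂ) := by
          refine Finset.sum_congr rfl fun l _ => ?_
          simp [mul_ite, mul_zero]
  rw [main]
  unfold autp
  rw [Finset.mul_sum]
  refine Finset.sum_congr rfl fun l _ => ?_
  field_simp

/-- denoising error bound for the periodic autocorrelation. -/
theorem denoise_autp {N : ℕ} [NeZero N] (ε : ℝ) (hε : 0 < ε) (x : Fin N → ℂ)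
    (hx : x ≠ 0) (b : Fin N → ℝ) (hb : ∀ n, b n = ‖dft x n‖)
    (η : Fin N → ℂ)
    (hη : linf η < min (min (ε / (4 * linfR b)) (ε / 2)) 1) :
    linf (fun j => idft (fun n => ((b n : ℂ) + η n) * ((b n : ℂ) + η n)) j
      - autp x j) < ε := by
  have hNpos : 0 < N := Nat.pos_of_ne_zero (NeZero.ne N)
  have hN : (N:ℂ) ≠ 0 := Nat.cast_ne_zero.mpr (NeZero.ne N)
  have hNR : (0:ℝ) < (N:ℝ) := by exact_mod_cast hNpos
  set t := linf η with htdef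
  set B := linfR b with hBdef
  have ht0 : 0 ≤ t := by
    have := Finset.le_sup' (fun k => ‖η k‖) (Finset.mem_univ (⟨0, hNpos⟩ : Fin N))
    exact le_trans (norm_nonneg _) this
  have htB : ∀ n, ‖η n‖ ≤ t :=
    fun n => Finset.le_sup' (fun k => ‖η k‖) (Finset.mem_univ n)
  have hbB : ∀ n, |b n| ≤ B :=
    fun n => Finset.le_sup' (fun k => |b k|) (Finset.mem_univ n)
  have hB0 : 0 ≤ B := le_trans (abs_nonneg _) (hbB ⟨0, hNpos⟩)
  have hB : 0 < B := by
    rcases hB0.lt_or_eq with h | h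
    · exact h
    · exfalso
      have : t < 0 := by
        have h1 := lt_of_lt_of_le hη (le_trans (min_le_left _ _) (min_le_left _ _))
        rw [← h] at h1
        simpa using h1
      linarith
  have ht1 : t < ε / (4 * B) := lt_of_lt_of_le hη (le_trans (min_le_left _ _) (min_le_left _ _))
  have ht2 : t < ε / 2 := lt_of_lt_of_le hη (le_trans (min_le_left _ _) (min_le_right _ _))
  have ht3 : t < 1 := lt_of_lt_of_le hη (min_le_right _ _)
  -- the error is idft of the perturbation
  have expand : ∀ j, idft (fun n => ((b n : ℂ) + η n) * ((b n : ℂ) + η n)) j - autp x j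
      = idft (fun n => 2 * (b n : ℂ) * η n + η n * η n) j := by
    intro j
    rw [← wk x j]
    unfold idft
    rw [← mul_sub, ← Finset.sum_sub_distrib]
    congr 1
    refine Finset.sum_congr rfl fun n _ => ?_
    have hb2 : ((b n : ℂ)) * ((b n : ℂ)) = dft x n * (starRingEnd ℂ) (dft x n) := by
      rw [hb n, Complex.mul_conj, ← Complex.ofReal_mul, ← sq, Complex.sq_norm]
    linear_combination (Complex.exp (2 * Real.pi * Complex.I * ((j:ℕ):ℂ) * ((n:ℕ):ℂ) / (N:ℂ))) * hb2
  -- termwise bound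
  have hterm : ∀ n : Fin N, ‖2 * (b n : ℂ) * η n + η n * η n‖ ≤ 2 * B * t + t * t := by
    intro n
    refine le_trans (norm_add_le _ _) ?_
    have h1 : ‖2 * (b n : ℂ) * η n‖ ≤ 2 * B * t := by
      rw [norm_mul, norm_mul]
      simp only [Complex.norm_real, Complex.norm_two, Real.norm_eq_abs]
      have := hbB n
      have := htB n
      have := norm_nonneg (η n)
      nlinarith [abs_nonneg (b n)]
    have h2 : ‖η n * η n‖ ≤ t * t := by
      rw [norm_mul]
      exact mul_le_mul (htB n) (htB n) (norm_nonneg _) ht0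
    linarith
  -- idft bound
  have hidft : ∀ j, ‖idft (fun n => 2 * (b n : ℂ) * η n + η n * η n) j‖
      ≤ 2 * B * t + t * t := by
    intro j
    unfold idft
    rw [norm_mul]
    have habsE : ∀ n : Fin N, ‖Complex.exp (2 * Real.pi * Complex.I * ((j:ℕ):ℂ) * ((n:ℕ):ℂ) / (N:ℂ))‖ = 1 := by
      intro n
      have : 2 * (Real.pi:ℂ) * Complex.I * ((j:ℕ):ℂ) * ((n:ℕ):ℂ) / (N:ℂ)
          = ((2 * Real.pi * ((j:ℕ):ℝ) * ((n:ℕ):ℝ) / (N:ℝ) : ℝ) : ℂ) * Complex.I := by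
        push_cast; ring
      rw [this, Complex.norm_exp_ofReal_mul_I]
    have hsum : ‖∑ n : Fin N, (2 * (b n : ℂ) * η n + η n * η n) *
        Complex.exp (2 * Real.pi * Complex.I * ((j:ℕ):ℂ) * ((n:ℕ):ℂ) / (N:ℂ))‖
        ≤ (N:ℝ) * (2 * B * t + t * t) := by
      refine le_trans (norm_sum_le _ _) ?_
      have hle : ∀ n : Fin N, ‖(2 * (b n : ℂ) * η n + η n * η n) *
          Complex.exp (2 * Real.pi * Complex.I * ((j:ℕ):ℂ) * ((n:ℕ):ℂ) / (N:ℂ))‖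
          ≤ 2 * B * t + t * t := by
        intro n
        rw [norm_mul, habsE n, mul_one]
        exact hterm n
      refine le_trans (Finset.sum_le_sum fun n _ => hle n) ?_
      rw [Finset.sum_const, Finset.card_univ, Fintype.card_fin, nsmul_eq_mul]
    have habs1 : ‖1 / (N:ℂ)‖ = 1 / (N:ℝ) := by
      rw [norm_div, norm_one, Complex.norm_natCast]
    rw [habs1]
    calc (1 / (N:ℝ)) * ‖∑ n : Fin N, (2 * (b n : ℂ) * η n + η n * η n) *
          Complex.exp (2 * Real.pi * Complex.I * ((j:ℕ):ℂ) * ((n:ℕ):ℂ) / (N:ℂ))‖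
        ≤ (1 / (N:ℝ)) * ((N:ℝ) * (2 * B * t + t * t)) := by
          exact mul_le_mul_of_nonneg_left hsum (by positivity)
      _ = 2 * B * t + t * t := by field_simp
  -- final bound
  have hC : 2 * B * t + t * t < ε := by
    rw [lt_div_iff₀ (by positivity : (0:ℝ) < 4 * B)] at ht1
    have e2 : t * t ≤ t := by nlinarith
    linarith
  unfold linf
  rw [Finset.sup'_lt_iff]
  intro j _
  calc ‖idft (fun n => ((b n : ℂ) + η n) * ((b n : ℂ) + η n)) j - autp x j‖
      = ‖idft (fun n => 2 * (b n : ℂ) * η n + η n * η n) j‖ := by rw [expand j]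
    _ ≤ 2 * B * t + t * t := hidft j
    _ < ε := hC
end
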